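/- arXiv:1310.3901 — 5 statements merged into one kernel-verified Lean document; each statement's English description precedes it below -/
import Mathlib

section
/- Let u₀ ≥ 0 and v₀ > 0, and set s = u₀ + v₀. Suppose g : ℝ → ℝ is differentiable, g(t) ≥ 0 for all t, and g(t)·exp(g(t)) = (u₀/v₀)·exp(u₀/v₀ - s²·t) for all t ∈ ℝ. Then the function v(t) := s / (1 + g(t)) satisfies v(0) = v₀ and v'(t) = (s - v(t))·v(t)² for all t ∈ ℝ. -/
private lemma xexp_inj (a b : ℝ) (ha : 0 ≤ a) (hb : 0 ≤ b)
    (h : a * Real.exp a = b * Real.exp b) : a = b := by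
  rcases lt_trichotomy a b with hab | hab | hab
  · have h1 := Real.exp_pos a
    have h2 := Real.exp_pos b
    have h3 : Real.exp a < Real.exp b := Real.exp_lt_exp.mpr hab
    nlinarith
  · exact hab
  · have h1 := Real.exp_pos a
    have h2 := Real.exp_pos b
    have h3 : Real.exp b < Real.exp a := Real.exp_lt_exp.mpr hab
    nlinarith

/-- If `g(t)` satisfies the defining relation of the Lambert W value
`W₀[(u₀/v₀) exp(u₀/v₀ - s² t)]` with `s = u₀ + v₀`, then
`v(t) = s / (1 + g(t))` satisfies `v(0) = v₀` and solves the decoupled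
Gray-Scott reaction ODE `v' = (s - v) v²`. -/
theorem lambertW_formula_solves_reaction_ODE
    (u₀ v₀ : ℝ) (hu₀ : 0 ≤ u₀) (hv₀ : 0 < v₀) (s : ℝ) (hs : s = u₀ + v₀)
    (g : ℝ → ℝ) (hg : Differentiable ℝ g) (hgnn : ∀ t : ℝ, 0 ≤ g t)
    (hgW : ∀ t : ℝ, g t * Real.exp (g t)
        = (u₀ / v₀) * Real.exp (u₀ / v₀ - s ^ 2 * t)) :
    (fun t : ℝ => s / (1 + g t)) 0 = v₀ ∧
    ∀ t : ℝ, deriv (fun t : ℝ => s / (1 + g t)) t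
        = (s - s / (1 + g t)) * (s / (1 + g t)) ^ 2 := by
  have hp : ∀ t : ℝ, (0:ℝ) < 1 + g t := fun t => by have := hgnn t; linarith
  constructor
  · have hg0 : g 0 = u₀ / v₀ := by
      apply xexp_inj _ _ (hgnn 0) (by positivity)
      have := hgW 0
      simpa using this
    have : 1 + g 0 ≠ 0 := (hp 0).ne'
    simp only [hg0]
    field_simp
    rw [hs]; ring
  · intro t
    -- derivative of g
    have hgd : HasDerivAt g (deriv g t) t := (hg t).hasDerivAt
    have h1 : HasDerivAt (fun t => g t * Real.exp (g t))
        (deriv g t * Real.exp (g t) + g t * (Real.exp (g t) * deriv g t)) t :=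
      hgd.mul hgd.exp
    have h2 : HasDerivAt (fun t : ℝ => (u₀ / v₀) * Real.exp (u₀ / v₀ - s ^ 2 * t))
        ((u₀ / v₀) * (Real.exp (u₀ / v₀ - s ^ 2 * t) * -(s ^ 2 * 1))) t := by
      simpa using (((((hasDerivAt_id t).const_mul (s ^ 2)).const_sub (u₀ / v₀)).exp).const_mul (u₀ / v₀))
    have hfun : (fun t => g t * Real.exp (g t))
        = fun t : ℝ => (u₀ / v₀) * Real.exp (u₀ / v₀ - s ^ 2 * t) := funext hgW
    rw [← hfun] at h2
    have heq := h1.unique h2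
    have hpt := hp t
    have key : deriv g t * (1 + g t) * Real.exp (g t)
        = -s ^ 2 * g t * Real.exp (g t) := by
      linear_combination heq + s ^ 2 * hgW t
    have k2 := mul_right_cancel₀ (Real.exp_ne_zero (g t)) key
    have hderiv : deriv g t = -s ^ 2 * g t / (1 + g t) := by
      field_simp
      linear_combination k2
    have hv : HasDerivAt (fun t => s / (1 + g t))
        ((0 * (1 + g t) - s * deriv g t) / (1 + g t) ^ 2) t :=
      (hasDerivAt_const t s).div (hgd.const_add 1) hpt.ne'
    rw [hv.deriv, hderiv]
    field_simp
    ring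
end

section
/- Let u₀ > 0 and v₀ > 0, and set s = u₀ + v₀. Then there exists a differentiable function g : ℝ → ℝ with g(t) > 0 and g(t)·exp(g(t)) = (u₀/v₀)·exp(u₀/v₀ - s²·t) for all t ∈ ℝ, and the function v(t) := s / (1 + g(t)) is differentiable, satisfies v(0) = v₀, and solves v'(t) = (s - v(t))·v(t)² for all t ∈ ℝ. -/
open Real Filter

/-- The auxiliary function `w ↦ w + exp w`, which parametrizes Lambert W. -/
noncomputable def lamPhi : ℝ → ℝ := fun w => w + Real.exp w

lemma lamPhi_hasDerivAt (w : ℝ) : HasDerivAt lamPhi (1 + Real.exp w) w :=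
  (hasDerivAt_id w).add (Real.hasDerivAt_exp w)

lemma lamPhi_strictMono : StrictMono lamPhi :=
  fun _ _ h => add_lt_add h (Real.exp_lt_exp.2 h)

lemma lamPhi_surjective : Function.Surjective lamPhi := by
  have hc : Continuous lamPhi := continuous_id.add Real.continuous_exp
  have htop : Tendsto lamPhi atTop atTop :=
    Tendsto.atTop_add_atTop tendsto_id Real.tendsto_exp_atTop
  have hbot : Tendsto lamPhi atBot atBot :=
    tendsto_id.atBot_add Real.tendsto_exp_atBot
  exact hc.surjective htop hbot

/-- An order iso version of `lamPhi`. -/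
noncomputable def lamIso : ℝ ≃o ℝ :=
  StrictMono.orderIsoOfSurjective lamPhi lamPhi_strictMono lamPhi_surjective

/-- Lambert-type inverse: `lamW y + exp (lamW y) = y`. -/
noncomputable def lamW : ℝ → ℝ := lamIso.symm

lemma lamIso_apply (w : ℝ) : lamIso w = w + Real.exp w := by
  have h := StrictMono.coe_orderIsoOfSurjective lamPhi lamPhi_strictMono lamPhi_surjective
  calc lamIso w = lamPhi w := congrFun h w
  _ = w + Real.exp w := rfl

lemma lamPhi_lamW (y : ℝ) : lamW y + Real.exp (lamW y) = y := by
  have h := lamIso.apply_symm_apply y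
  rw [lamIso_apply] at h
  exact h

lemma lamW_lamPhi (w : ℝ) : lamW (w + Real.exp w) = w := by
  have h := lamIso.symm_apply_apply w
  rw [lamIso_apply] at h
  exact h

lemma lamW_hasDerivAt (y : ℝ) :
    HasDerivAt lamW (1 + Real.exp (lamW y))⁻¹ y := by
  have hcont : ContinuousAt lamW y := (lamIso.toHomeomorph.symm.continuous).continuousAt
  have hf : HasDerivAt lamPhi (1 + Real.exp (lamW y)) (lamW y) :=
    lamPhi_hasDerivAt (lamW y)
  have hne : (1 + Real.exp (lamW y)) ≠ 0 := by positivity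
  refine HasDerivAt.of_local_left_inverse hcont hf hne ?_
  filter_upwards with z
  exact lamPhi_lamW z

/-- For `u₀, v₀ > 0` and `s = u₀ + v₀`, there exists a differentiable positive
function `g` with `g(t) exp(g(t)) = (u₀/v₀) exp(u₀/v₀ - s² t)` (namely, the
Lambert W value `W₀[(u₀/v₀) exp(u₀/v₀ - s² t)]`), and then
`v(t) = s / (1 + g(t))` is differentiable, satisfies `v(0) = v₀`, and solves
the decoupled Gray-Scott reaction ODE `v' = (s - v) v²`. -/
theorem lambertW_solution_exists
    (u₀ v₀ : ℝ) (hu₀ : 0 < u₀) (hv₀ : 0 < v₀) (s : ℝ) (hs : s = u₀ + v₀) :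
    ∃ g : ℝ → ℝ, Differentiable ℝ g ∧ (∀ t : ℝ, 0 < g t) ∧
      (∀ t : ℝ, g t * Real.exp (g t)
          = (u₀ / v₀) * Real.exp (u₀ / v₀ - s ^ 2 * t)) ∧
      Differentiable ℝ (fun t : ℝ => s / (1 + g t)) ∧
      (fun t : ℝ => s / (1 + g t)) 0 = v₀ ∧
      (∀ t : ℝ, deriv (fun t : ℝ => s / (1 + g t)) t
          = (s - s / (1 + g t)) * (s / (1 + g t)) ^ 2) := by
  set c : ℝ := u₀ / v₀ with hc
  have hcpos : 0 < c := div_pos hu₀ hv₀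
  set y : ℝ → ℝ := fun t => Real.log c + c - s ^ 2 * t with hy
  set g : ℝ → ℝ := fun t => Real.exp (lamW (y t)) with hg
  have hgpos : ∀ t, 0 < g t := fun t => Real.exp_pos _
  have hyD : ∀ t, HasDerivAt y (-(s ^ 2)) t := by
    intro t
    have : HasDerivAt (fun t : ℝ => s ^ 2 * t) (s ^ 2) t := by
      simpa using (hasDerivAt_id t).const_mul (s ^ 2)
    simpa using (hasDerivAt_const t (Real.log c + c)).fun_sub this
  -- derivative of g
  have hgD : ∀ t, HasDerivAt g (g t * ((1 + g t)⁻¹ * (-(s ^ 2)))) t := by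
    intro t
    have hW : HasDerivAt (fun t => lamW (y t)) ((1 + g t)⁻¹ * (-(s ^ 2))) t := by
      have := (lamW_hasDerivAt (y t)).comp t (hyD t)
      simpa [hg, mul_comm, Function.comp_def] using this
    simpa [hg] using hW.exp
  have hgDiff : Differentiable ℝ g := fun t => (hgD t).differentiableAt
  have hprod : ∀ t, g t * Real.exp (g t) = c * Real.exp (c - s ^ 2 * t) := by
    intro t
    have h1 : g t * Real.exp (g t) = Real.exp (lamW (y t) + Real.exp (lamW (y t))) := by
      rw [Real.exp_add]
    have h2 : y t = Real.log c + (c - s ^ 2 * t) := by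
      show Real.log c + c - s ^ 2 * t = _; ring
    rw [h1, lamPhi_lamW, h2, Real.exp_add, Real.exp_log hcpos]
  have hden : ∀ t, (1 : ℝ) + g t ≠ 0 := fun t => by positivity
  have hvD : ∀ t, HasDerivAt (fun t => s / (1 + g t))
      (-(s * (g t * ((1 + g t)⁻¹ * (-(s ^ 2))))) / (1 + g t) ^ 2) t := by
    intro t
    have hd : HasDerivAt (fun t => 1 + g t) (g t * ((1 + g t)⁻¹ * (-(s ^ 2)))) t :=
      (hgD t).const_add 1
    simpa using (hasDerivAt_const t s).fun_div hd (hden t)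
  have hvDiff : Differentiable ℝ (fun t => s / (1 + g t)) :=
    fun t => (hvD t).differentiableAt
  refine ⟨g, hgDiff, hgpos, fun t => by rw [hprod t, hc], hvDiff, ?_, ?_⟩
  · -- v(0) = v₀
    have hy0 : y 0 = Real.log c + Real.exp (Real.log c) := by
      show Real.log c + c - s ^ 2 * 0 = _
      rw [Real.exp_log hcpos]; ring
    have hg0 : g 0 = c := by
      show Real.exp (lamW (y 0)) = c
      rw [hy0, lamW_lamPhi, Real.exp_log hcpos]
    simp only [hg0, hc, hs]
    field_simp
    ring
  · intro t
    rw [(hvD t).deriv]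
    have h1 : (1 : ℝ) + g t ≠ 0 := hden t
    field_simp
    ring
end

section
/- Let D > 0, α > 0, and let u : ℝ × ℝ → ℂ be such that for each t the map x ↦ u(t,x) is 2π-periodic and twice continuously differentiable, for each x the map t ↦ u(t,x) is continuously differentiable, ∂u/∂t and ∂²u/∂x² are jointly continuous, and u satisfies ∂u/∂t = D·∂²u/∂x² + α·(1 - u) on ℝ × ℝ. Let a_k = α if k = 0 and a_k = 0 otherwise. Then for every k ∈ ℤ and t ∈ ℝ, the k-th Fourier coefficient ĉ_k(t) of u(t,·) on the circle of circumference 2π satisfies ĉ_k(t) = (ĉ_k(0) - a_k/(α + D·k²))·exp(-(α + D·k²)·t) + a_k/(α + D·k²). -/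
open MeasureTheory intervalIntegral

/-- The `k`-th Fourier coefficient of a `2π`-periodic function `f : ℝ → ℂ`:
`(1/2π) ∫_{-π}^{π} f(x) exp(-i k x) dx`. -/
noncomputable def fourierCoeff2pi (f : ℝ → ℂ) (k : ℤ) : ℂ :=
  (1 / (2 * (Real.pi : ℂ))) *
    ∫ x in (-Real.pi : ℝ)..Real.pi, f x * Complex.exp (-Complex.I * (k : ℂ) * (x : ℂ))

namespace GSaux

noncomputable def E (k : ℤ) (x : ℝ) : ℂ := Complex.exp (-Complex.I * (k : ℂ) * (x : ℂ))

lemma continuous_E (k : ℤ) : Continuous (E k) := by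
  unfold E; continuity

lemma hasDerivAt_E (k : ℤ) (x : ℝ) :
    HasDerivAt (E k) ((-Complex.I * (k : ℂ)) * E k x) x := by
  have h1 : HasDerivAt (fun y : ℝ => -Complex.I * (k : ℂ) * (y : ℂ))
      (-Complex.I * (k : ℂ)) x := by
    simpa using (Complex.ofRealCLM.hasDerivAt (x := x)).const_mul (-Complex.I * (k : ℂ))
  have h2 := h1.cexp
  unfold E
  convert h2 using 1
  ring

lemma E_per (k : ℤ) (x : ℝ) : E k (x + 2 * Real.pi) = E k x := by
  unfold E
  push_cast
  rw [mul_add, Complex.exp_add]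
  have h : (-Complex.I * (k : ℂ) * (2 * (Real.pi : ℂ))) = (-k : ℤ) * (2 * (Real.pi : ℂ) * Complex.I) := by
    push_cast; ring
  rw [h, Complex.exp_int_mul_two_pi_mul_I, mul_one]

lemma norm_E (k : ℤ) (x : ℝ) : ‖E k x‖ = 1 := by
  have h : (-Complex.I * (k : ℂ) * (x : ℂ)) = ((-(k * x) : ℝ) : ℂ) * Complex.I := by
    push_cast; ring
  unfold E
  rw [h, Complex.norm_exp_ofReal_mul_I]

lemma E_pi_eq (k : ℤ) : E k Real.pi = E k (-Real.pi) := by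
  have := E_per k (-Real.pi)
  rw [show -Real.pi + 2 * Real.pi = Real.pi by ring] at this
  exact this

lemma integral_E (k : ℤ) :
    (∫ x in (-Real.pi : ℝ)..Real.pi, E k x) = if k = 0 then (2 * Real.pi : ℂ) else 0 := by
  by_cases hk : k = 0
  · subst hk
    simp only [if_pos rfl]
    have h1 : ∀ x : ℝ, E 0 x = 1 := by intro x; simp [E]
    simp only [h1]
    simp
    ring
  · rw [if_neg hk]
    have hc : (-Complex.I * (k : ℂ)) ≠ 0 := by
      simp [Complex.I_ne_zero, Complex.ext_iff]
      exact_mod_cast hk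
    have hD : ∀ x ∈ Set.uIcc (-Real.pi) Real.pi,
        HasDerivAt (fun y : ℝ => (-Complex.I * (k : ℂ))⁻¹ * E k y) (E k x) x := by
      intro x _
      have h2 := (hasDerivAt_E k x).const_mul (-Complex.I * (k : ℂ))⁻¹
      rw [inv_mul_cancel_left₀ hc] at h2
      exact h2
    rw [intervalIntegral.integral_eq_sub_of_hasDerivAt hD
      ((continuous_E k).intervalIntegrable _ _)]
    rw [E_pi_eq k]
    ring

lemma deriv_per {g : ℝ → ℂ} (hp : ∀ x, g (x + 2 * Real.pi) = g x) :
    ∀ x, deriv g (x + 2 * Real.pi) = deriv g x := by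
  intro x
  have hfun : (fun y : ℝ => g (y + 2 * Real.pi)) = g := funext fun y => hp y
  rw [← deriv_comp_add_const, hfun]

lemma parts1 (k : ℤ) (g : ℝ → ℂ) (hg : Differentiable ℝ g)
    (hg' : Continuous (deriv g)) (hp : ∀ x, g (x + 2 * Real.pi) = g x) :
    (∫ x in (-Real.pi : ℝ)..Real.pi, deriv g x * E k x)
      = (Complex.I * (k : ℂ)) * ∫ x in (-Real.pi : ℝ)..Real.pi, g x * E k x := by
  have hu : ∀ x ∈ Set.uIcc (-Real.pi) Real.pi,
      HasDerivAt (E k) ((-Complex.I * (k : ℂ)) * E k x) x := fun x _ => hasDerivAt_E k x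
  have hv : ∀ x ∈ Set.uIcc (-Real.pi) Real.pi,
      HasDerivAt g (deriv g x) x := fun x _ => (hg x).hasDerivAt
  have hiu : IntervalIntegrable (fun x => (-Complex.I * (k : ℂ)) * E k x) volume (-Real.pi) Real.pi :=
    (continuous_const.mul (continuous_E k)).intervalIntegrable _ _
  have hiv : IntervalIntegrable (deriv g) volume (-Real.pi) Real.pi :=
    hg'.intervalIntegrable _ _
  have h := intervalIntegral.integral_mul_deriv_eq_deriv_mul hu hv hiu hiv
  have hgper : g Real.pi = g (-Real.pi) := by
    have := hp (-Real.pi)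
    rw [show -Real.pi + 2 * Real.pi = Real.pi by ring] at this
    exact this
  simp_rw [mul_comm (deriv g _) (E k _)]
  rw [h, E_pi_eq k, hgper]
  have : (∫ x in (-Real.pi : ℝ)..Real.pi, -Complex.I * (k : ℂ) * E k x * g x)
      = (-Complex.I * (k : ℂ)) * ∫ x in (-Real.pi : ℝ)..Real.pi, g x * E k x := by
    rw [← intervalIntegral.integral_const_mul]
    congr 1; ext x; ring
  rw [this]; ring

lemma parts2 (k : ℤ) (f : ℝ → ℂ) (hf : ContDiff ℝ 2 f) (hp : ∀ x, f (x + 2 * Real.pi) = f x) :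
    (∫ x in (-Real.pi : ℝ)..Real.pi, deriv (deriv f) x * E k x)
      = -((k : ℂ))^2 * ∫ x in (-Real.pi : ℝ)..Real.pi, f x * E k x := by
  have h2 : ContDiff ℝ (1 + 1) f := by norm_num; exact hf
  have hdf : ContDiff ℝ 1 (deriv f) := (contDiff_succ_iff_deriv.mp h2).2.2
  have hdfp : ∀ x, deriv f (x + 2 * Real.pi) = deriv f x := deriv_per hp
  have e1 := parts1 k (deriv f) (hdf.differentiable one_ne_zero)
    (hdf.continuous_deriv le_rfl) hdfp
  have e2 := parts1 k f (hf.differentiable (by norm_num))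
    ((hf.iterate_deriv' 1 1).continuous) hp
  rw [e1, e2]
  have hI := Complex.I_sq
  set X := ∫ x in (-Real.pi : ℝ)..Real.pi, f x * E k x
  linear_combination ((k:ℂ))^2 * X * hI

open Metric in
lemma hasDerivAt_coeff (u : ℝ × ℝ → ℂ)
    (hx : ∀ t : ℝ, ContDiff ℝ 2 (fun x : ℝ => u (t, x)))
    (ht : ∀ x : ℝ, ContDiff ℝ 1 (fun t : ℝ => u (t, x)))
    (hcont_t : Continuous fun p : ℝ × ℝ => deriv (fun s : ℝ => u (s, p.2)) p.1)
    (k : ℤ) (t₀ : ℝ) :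
    HasDerivAt (fun t => ∫ x in (-Real.pi : ℝ)..Real.pi, u (t, x) * E k x)
      (∫ x in (-Real.pi : ℝ)..Real.pi, deriv (fun s : ℝ => u (s, x)) t₀ * E k x) t₀ := by
  obtain ⟨C, hC⟩ := (IsCompact.exists_bound_of_continuousOn
    ((isCompact_Icc (a := t₀ - 1) (b := t₀ + 1)).prod
      (isCompact_Icc (a := -Real.pi) (b := Real.pi)))
    hcont_t.continuousOn)
  have main := intervalIntegral.hasDerivAt_integral_of_dominated_loc_of_deriv_le
    (F := fun t x => u (t, x) * E k x)
    (F' := fun t x => deriv (fun s : ℝ => u (s, x)) t * E k x)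
    (x₀ := t₀) (a := -Real.pi) (b := Real.pi) (bound := fun _ => C)
    (μ := volume) (s := ball t₀ 1) (ball_mem_nhds t₀ one_pos)
    (Filter.Eventually.of_forall fun t =>
      (((hx t).continuous).mul (continuous_E k)).aestronglyMeasurable)
    ((((hx t₀).continuous).mul (continuous_E k)).intervalIntegrable _ _)
    (((hcont_t.comp (continuous_const.prodMk continuous_id)).mul
      (continuous_E k)).aestronglyMeasurable)
    ?_ ?_ ?_
  · exact main.2
  · refine Filter.Eventually.of_forall fun x hxmem s hs => ?_
    rw [norm_mul, norm_E, mul_one]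
    refine hC (s, x) ⟨?_, ?_⟩
    · have := abs_lt.mp (by simpa [Real.dist_eq] using mem_ball.mp hs)
      constructor <;> linarith [this.1, this.2]
    · have hx2 : x ∈ Set.Ioc (min (-Real.pi) Real.pi) (max (-Real.pi) Real.pi) := hxmem
      rw [min_eq_left (by linarith [Real.pi_pos]), max_eq_right (by linarith [Real.pi_pos])] at hx2
      exact ⟨le_of_lt hx2.1, hx2.2⟩
  · exact intervalIntegrable_const
  · refine Filter.Eventually.of_forall fun x _ s _ => ?_
    exact (((ht x).differentiable one_ne_zero) s).hasDerivAt.mul_const (E k x)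

end GSaux

open GSaux in
/-- For a smooth `2π`-periodic solution of the linear Gray-Scott sub-step
`uₜ = D u_xx + α (1 - u)`, the `k`-th Fourier coefficient evolves as
`ĉ_k(t) = (ĉ_k(0) - a_k/(α + D k²)) exp(-(α + D k²) t) + a_k/(α + D k²)`,
where `a_k` is the `k`-th Fourier coefficient of the constant function `α`. -/
theorem grayScott_linear_substep_fourier_coeff
    (D α : ℝ) (hD : 0 < D) (hα : 0 < α) (u : ℝ × ℝ → ℂ)
    (hper : ∀ t x : ℝ, u (t, x + 2 * Real.pi) = u (t, x))
    (hx : ∀ t : ℝ, ContDiff ℝ 2 (fun x : ℝ => u (t, x)))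
    (ht : ∀ x : ℝ, ContDiff ℝ 1 (fun t : ℝ => u (t, x)))
    (hcont_t : Continuous fun p : ℝ × ℝ => deriv (fun s : ℝ => u (s, p.2)) p.1)
    (hcont_xx : Continuous fun p : ℝ × ℝ =>
        deriv (deriv (fun y : ℝ => u (p.1, y))) p.2)
    (hpde : ∀ t x : ℝ, deriv (fun s : ℝ => u (s, x)) t
        = (D : ℂ) * deriv (deriv (fun y : ℝ => u (t, y))) x + (α : ℂ) * (1 - u (t, x)))
    (a : ℤ → ℂ) (ha : ∀ k : ℤ, a k = if k = 0 then (α : ℂ) else 0) :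
    ∀ (k : ℤ) (t : ℝ),
      fourierCoeff2pi (fun x : ℝ => u (t, x)) k
        = (fourierCoeff2pi (fun x : ℝ => u (0, x)) k
              - a k / ((α : ℂ) + (D : ℂ) * (k : ℂ) ^ 2)) *
            Complex.exp (-((α : ℂ) + (D : ℂ) * (k : ℂ) ^ 2) * (t : ℂ))
          + a k / ((α : ℂ) + (D : ℂ) * (k : ℂ) ^ 2) := by
  intro k t
  set lam : ℂ := (α : ℂ) + (D : ℂ) * (k : ℂ) ^ 2 with hlam
  have hlam_cast : lam = ((α + D * (k : ℝ) ^ 2 : ℝ) : ℂ) := by push_cast; ring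
  have hlamR_pos : (0 : ℝ) < α + D * (k : ℝ) ^ 2 := by positivity
  have hlam_ne : lam ≠ 0 := by
    rw [hlam_cast]
    exact_mod_cast (ne_of_gt hlamR_pos)
  have hpi_ne : (2 * (Real.pi : ℂ)) ≠ 0 := by
    simp [Complex.ext_iff, Real.pi_ne_zero]
  set c : ℝ → ℂ := fun s => fourierCoeff2pi (fun x : ℝ => u (s, x)) k with hc
  set I : ℝ → ℂ := fun s => ∫ x in (-Real.pi : ℝ)..Real.pi, u (s, x) * E k x with hI
  have hcI : ∀ s, c s = (1 / (2 * (Real.pi : ℂ))) * I s := fun s => rfl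
  -- the ODE for c
  have hderiv : ∀ s : ℝ, HasDerivAt c (-lam * c s + a k) s := by
    intro s
    have h0 := (hasDerivAt_coeff u hx ht hcont_t k s).const_mul (1 / (2 * (Real.pi : ℂ)))
    have hJ : (∫ x in (-Real.pi : ℝ)..Real.pi, deriv (fun s' : ℝ => u (s', x)) s * E k x)
        = (D : ℂ) * (-((k : ℂ))^2 * I s)
          + ((α : ℂ) * (if k = 0 then (2 * Real.pi : ℂ) else 0) - (α : ℂ) * I s) := by
      have hint : ∀ x : ℝ, deriv (fun s' : ℝ => u (s', x)) s * E k x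
          = (D : ℂ) * (deriv (deriv (fun y : ℝ => u (s, y))) x * E k x)
            + ((α : ℂ) * E k x - (α : ℂ) * (u (s, x) * E k x)) := by
        intro x; rw [hpde s x]; ring
      have cA : Continuous fun x : ℝ => deriv (deriv (fun y : ℝ => u (s, y))) x * E k x :=
        (hcont_xx.comp (continuous_const.prodMk continuous_id)).mul (continuous_E k)
      have cB1 : Continuous fun x : ℝ => (α : ℂ) * E k x := continuous_const.mul (continuous_E k)
      have cB2 : Continuous fun x : ℝ => (α : ℂ) * (u (s, x) * E k x) :=
        continuous_const.mul (((hx s).continuous).mul (continuous_E k))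
      simp_rw [hint]
      rw [intervalIntegral.integral_add
        (f := fun x : ℝ => (D : ℂ) * (deriv (deriv (fun y : ℝ => u (s, y))) x * E k x))
        (g := fun x : ℝ => (α : ℂ) * E k x - (α : ℂ) * (u (s, x) * E k x))
        ((continuous_const.mul cA).intervalIntegrable _ _)
        ((cB1.sub cB2).intervalIntegrable _ _),
        intervalIntegral.integral_sub (cB1.intervalIntegrable _ _) (cB2.intervalIntegrable _ _),
        intervalIntegral.integral_const_mul, intervalIntegral.integral_const_mul,
        intervalIntegral.integral_const_mul,
        parts2 k (fun y : ℝ => u (s, y)) (hx s) (fun y => hper s y),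
        integral_E k]
    have hval : (1 / (2 * (Real.pi : ℂ))) *
        (∫ x in (-Real.pi : ℝ)..Real.pi, deriv (fun s' : ℝ => u (s', x)) s * E k x)
        = -lam * c s + a k := by
      rw [hJ, hcI s, ha k]
      by_cases hk : k = 0
      · subst hk
        simp only [if_pos rfl]
        field_simp
        simp only [↓reduceIte, hlam, Int.cast_zero]
        ring
      · rw [if_neg hk, if_neg hk]
        field_simp
        ring
    rw [← hval]
    exact h0
  -- solve the ODE
  set q : ℂ := a k / lam with hq
  set g : ℝ → ℂ := fun s => (c s - q) * Complex.exp (lam * s) with hg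
  have hexp : ∀ s : ℝ, HasDerivAt (fun s' : ℝ => Complex.exp (lam * s'))
      (Complex.exp (lam * s) * lam) s := by
    intro s
    have h1 : HasDerivAt (fun s' : ℝ => lam * (s' : ℂ)) lam s := by
      simpa using (Complex.ofRealCLM.hasDerivAt (x := s)).const_mul lam
    exact h1.cexp
  have hgderiv : ∀ s : ℝ, HasDerivAt g 0 s := by
    intro s
    have h1 := ((hderiv s).sub_const q).mul (hexp s)
    refine h1.congr_deriv ?_
    have hql : lam * q = a k := by rw [hq]; field_simp
    linear_combination -(Complex.exp (lam * s)) * hql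
  have hconst : ∀ s : ℝ, g s = g 0 := by
    intro s
    exact is_const_of_deriv_eq_zero (fun y => (hgderiv y).differentiableAt)
      (fun y => (hgderiv y).deriv) s 0
  have hg0 : g 0 = c 0 - q := by simp [hg]
  have hgt := hconst t
  rw [hg0] at hgt
  have hexp1 : Complex.exp (lam * t) * Complex.exp (-lam * t) = 1 := by
    rw [← Complex.exp_add]
    ring_nf
    exact Complex.exp_zero
  have hfinal : c t = (c 0 - q) * Complex.exp (-lam * t) + q := by
    have h2 : c t - q = (c 0 - q) * Complex.exp (-lam * t) := by
      calc c t - q = (c t - q) * (Complex.exp (lam * t) * Complex.exp (-lam * t)) := by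
            rw [hexp1, mul_one]
        _ = ((c t - q) * Complex.exp (lam * t)) * Complex.exp (-lam * t) := by ring
        _ = (c 0 - q) * Complex.exp (-lam * t) := by rw [show (c t - q) * Complex.exp (lam * (t:ℂ)) = g t from rfl, hgt]
    linear_combination h2
  exact hfinal
end

section
/- Let 𝔸 be a complete normed algebra (Banach algebra) over ℝ with exponential exp, and let A, B ∈ 𝔸. Define f : ℝ → 𝔸 by f(t) = exp(t·B/2) · exp(t·A) · exp(t·B/2) - exp(t·(A+B)). Then f(0) = 0, f'(0) = 0, and f''(0) = 0; that is, Strang splitting agrees with the exact exponential flow to second order in t. -/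
open NormedSpace

/-- In a Banach algebra, the Strang splitting
`t ↦ exp(tB/2) exp(tA) exp(tB/2)` agrees with the exact exponential flow
`t ↦ exp(t(A+B))` to second order in `t`: their difference `f` satisfies
`f(0) = 0`, `f'(0) = 0`, `f''(0) = 0`. -/
theorem strang_splitting_second_order
    {𝔸 : Type*} [NormedRing 𝔸] [NormedAlgebra ℝ 𝔸] [CompleteSpace 𝔸]
    (A B : 𝔸)
    (f : ℝ → 𝔸)
    (hf : ∀ t : ℝ, f t =
        exp ((t / 2) • B) * exp (t • A) * exp ((t / 2) • B)
          - exp (t • (A + B))) :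
    f 0 = 0 ∧ deriv f 0 = 0 ∧ deriv (deriv f) 0 = 0 := by
  set C : 𝔸 := (2:ℝ)⁻¹ • B with hCdef
  set D : 𝔸 := A + B with hDdef
  have hsm : ∀ t : ℝ, (t / 2) • B = t • C := fun t => by
    rw [hCdef, smul_smul, div_eq_mul_inv]
  have hfe : f = fun t : ℝ =>
      exp (t • C) * exp (t • A) * exp (t • C) - exp (t • D) := by
    funext t; rw [hf t, hsm t]
  subst hfe
  have hC : ∀ t : ℝ, HasDerivAt (fun s : ℝ => exp (s • C)) (exp (t • C) * C) t :=
    fun t => hasDerivAt_exp_smul_const C t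
  have hA : ∀ t : ℝ, HasDerivAt (fun s : ℝ => exp (s • A)) (exp (t • A) * A) t :=
    fun t => hasDerivAt_exp_smul_const A t
  have hD : ∀ t : ℝ, HasDerivAt (fun s : ℝ => exp (s • D)) (exp (t • D) * D) t :=
    fun t => hasDerivAt_exp_smul_const D t
  have hV : ∀ t : ℝ, HasDerivAt
      (fun s : ℝ => exp (s • C) * exp (s • A) * exp (s • C) - exp (s • D))
      ((exp (t • C) * C * exp (t • A) + exp (t • C) * (exp (t • A) * A))
          * exp (t • C)
        + exp (t • C) * exp (t • A) * (exp (t • C) * C)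
        - exp (t • D) * D) t :=
    fun t => (((hC t).mul (hA t)).mul (hC t)).sub (hD t)
  have hderiv : deriv
      (fun s : ℝ => exp (s • C) * exp (s • A) * exp (s • C) - exp (s • D))
      = fun t : ℝ =>
        (exp (t • C) * C * exp (t • A) + exp (t • C) * (exp (t • A) * A))
            * exp (t • C)
          + exp (t • C) * exp (t • A) * (exp (t • C) * C)
          - exp (t • D) * D :=
    funext fun t => (hV t).deriv
  refine ⟨?_, ?_, ?_⟩
  · simp [exp_zero]
  · rw [hderiv]
    simp only [zero_smul, exp_zero, one_mul, mul_one]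
    rw [hCdef, hDdef]
    module
  · rw [hderiv]
    have hW : HasDerivAt
        (fun t : ℝ =>
          (exp (t • C) * C * exp (t • A) + exp (t • C) * (exp (t • A) * A))
              * exp (t • C)
            + exp (t • C) * exp (t • A) * (exp (t • C) * C)
            - exp (t • D) * D)
        (((exp ((0:ℝ) • C) * C * C * exp ((0:ℝ) • A)
              + exp ((0:ℝ) • C) * C * (exp ((0:ℝ) • A) * A))
            + (exp ((0:ℝ) • C) * C * (exp ((0:ℝ) • A) * A)
              + exp ((0:ℝ) • C) * (exp ((0:ℝ) • A) * A * A)))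
              * exp ((0:ℝ) • C)
          + (exp ((0:ℝ) • C) * C * exp ((0:ℝ) • A)
              + exp ((0:ℝ) • C) * (exp ((0:ℝ) • A) * A))
              * (exp ((0:ℝ) • C) * C)
          + ((exp ((0:ℝ) • C) * C * exp ((0:ℝ) • A)
              + exp ((0:ℝ) • C) * (exp ((0:ℝ) • A) * A))
              * (exp ((0:ℝ) • C) * C)
            + exp ((0:ℝ) • C) * exp ((0:ℝ) • A) * (exp ((0:ℝ) • C) * C * C))
          - exp ((0:ℝ) • D) * D * D) 0 := by
      exact ((((((hC 0).mul_const C).mul (hA 0)).add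
          ((hC 0).mul ((hA 0).mul_const A))).mul (hC 0)).add
          (((hC 0).mul (hA 0)).mul ((hC 0).mul_const C))).sub
          ((hD 0).mul_const D)
    rw [hW.deriv]
    simp only [zero_smul, exp_zero, one_mul, mul_one]
    rw [hCdef, hDdef]
    simp only [smul_mul_assoc, mul_smul_comm, mul_add, add_mul, smul_smul]
    module
end

section
/- Let 𝔸 be a complete normed algebra (Banach algebra) over ℝ with exponential exp, and let A, B ∈ 𝔸. Set E = (B·A² + A²·B + B·A·B)/2 - (B²·A + A·B²)/4 - A·B·A. Then there exists a constant C > 0 such that for all t ∈ ℝ with |t| ≤ 1, ‖exp(t·B/2)·exp(t·A)·exp(t·B/2) - exp(t·(A+B)) - (t³/6)·E‖ ≤ C·|t|⁴. -/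
open NormedSpace
open scoped Nat

/-- The polynomial part of the Strang splitting error beyond order `t³`. -/
noncomputable def strangG {𝔸 : Type*} [NormedRing 𝔸] [NormedAlgebra ℝ 𝔸] (A B : 𝔸) (t : ℝ) : 𝔸 :=
  (((1 : ℝ) / 12) • (A * A * A * B)
      + ((1 : ℝ) / 16) • (A * A * B * B)
      + ((1 : ℝ) / 48) • (A * B * B * B)
      + ((1 : ℝ) / 12) • (B * A * A * A)
      + ((1 : ℝ) / 8) • (B * A * A * B)
      + ((1 : ℝ) / 16) • (B * A * B * B)
      + ((1 : ℝ) / 16) • (B * B * A * A)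
      + ((1 : ℝ) / 16) • (B * B * A * B)
      + ((1 : ℝ) / 48) • (B * B * B * A)
      + ((7 : ℝ) / 192) • (B * B * B * B))
  + t • (((1 : ℝ) / 48) • (A * A * A * B * B)
      + ((1 : ℝ) / 96) • (A * A * B * B * B)
      + ((1 : ℝ) / 24) • (B * A * A * A * B)
      + ((1 : ℝ) / 32) • (B * A * A * B * B)
      + ((1 : ℝ) / 96) • (B * A * B * B * B)
      + ((1 : ℝ) / 48) • (B * B * A * A * A)
      + ((1 : ℝ) / 32) • (B * B * A * A * B)
      + ((1 : ℝ) / 64) • (B * B * A * B * B)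
      + ((1 : ℝ) / 96) • (B * B * B * A * A)
      + ((1 : ℝ) / 96) • (B * B * B * A * B)
      + ((1 : ℝ) / 192) • (B * B * B * B * B))
  + t ^ 2 • (((1 : ℝ) / 288) • (A * A * A * B * B * B)
      + ((1 : ℝ) / 96) • (B * A * A * A * B * B)
      + ((1 : ℝ) / 192) • (B * A * A * B * B * B)
      + ((1 : ℝ) / 96) • (B * B * A * A * A * B)
      + ((1 : ℝ) / 128) • (B * B * A * A * B * B)
      + ((1 : ℝ) / 384) • (B * B * A * B * B * B)
      + ((1 : ℝ) / 288) • (B * B * B * A * A * A)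
      + ((1 : ℝ) / 192) • (B * B * B * A * A * B)
      + ((1 : ℝ) / 384) • (B * B * B * A * B * B)
      + ((1 : ℝ) / 2304) • (B * B * B * B * B * B))
  + t ^ 3 • (((1 : ℝ) / 576) • (B * A * A * A * B * B * B)
      + ((1 : ℝ) / 384) • (B * B * A * A * A * B * B)
      + ((1 : ℝ) / 768) • (B * B * A * A * B * B * B)
      + ((1 : ℝ) / 576) • (B * B * B * A * A * A * B)
      + ((1 : ℝ) / 768) • (B * B * B * A * A * B * B)
      + ((1 : ℝ) / 2304) • (B * B * B * A * B * B * B))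
  + t ^ 4 • (((1 : ℝ) / 2304) • (B * B * A * A * A * B * B * B)
      + ((1 : ℝ) / 2304) • (B * B * B * A * A * A * B * B)
      + ((1 : ℝ) / 4608) • (B * B * B * A * A * B * B * B))
  + t ^ 5 • (((1 : ℝ) / 13824) • (B * B * B * A * A * A * B * B * B))

private lemma strang_key {𝔸 : Type*} [NormedRing 𝔸] [NormedAlgebra ℝ 𝔸]
    (A B E : 𝔸)
    (hE : E = (2 : ℝ)⁻¹ • (B * A ^ 2 + A ^ 2 * B + B * A * B)
        - (4 : ℝ)⁻¹ • (B ^ 2 * A + A * B ^ 2)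
        - A * B * A) (t : ℝ) :
    (∑ n ∈ Finset.range 4, ((n ! : ℝ))⁻¹ • ((t / 2) • B) ^ n)
      * (∑ n ∈ Finset.range 4, ((n ! : ℝ))⁻¹ • (t • A) ^ n)
      * (∑ n ∈ Finset.range 4, ((n ! : ℝ))⁻¹ • ((t / 2) • B) ^ n)
      - (∑ n ∈ Finset.range 4, ((n ! : ℝ))⁻¹ • (t • (A + B)) ^ n)
      - (t ^ 3 / 6) • E = t ^ 4 • strangG A B t := by
  subst hE
  simp only [strangG, Finset.sum_range_succ, Finset.sum_range_zero, Nat.factorial,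
    pow_succ, pow_zero, one_mul, mul_one, Nat.cast_ofNat, Nat.cast_one, zero_add,
    mul_add, add_mul, smul_mul_assoc, mul_smul_comm, smul_smul, mul_assoc, smul_add,
    sub_mul, mul_sub, smul_sub]
  match_scalars <;> ring

private lemma strang_rem {𝔸 : Type*} [NormedRing 𝔸] [NormedAlgebra ℝ 𝔸] [CompleteSpace 𝔸]
    (X : 𝔸) (t : ℝ) (ht : |t| ≤ 1) :
    ‖exp (t • X) - ∑ n ∈ Finset.range 4, ((n ! : ℝ))⁻¹ • (t • X) ^ n‖
      ≤ (‖X‖ ^ 4 * Real.exp ‖X‖) * |t| ^ 4 := by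
  set f : ℕ → 𝔸 := fun n => ((n ! : ℝ))⁻¹ • (t • X) ^ n with hfdef
  have hsum : Summable f := expSeries_summable' (𝕂 := ℝ) (t • X)
  have htail : exp (t • X) - ∑ n ∈ Finset.range 4, f n = ∑' i, f (i + 4) := by
    have h := Summable.sum_add_tsum_nat_add' (k := 4) ((summable_nat_add_iff 4).mpr hsum)
    have hexp : exp (t • X) = ∑' n, f n := by
      rw [exp_eq_tsum ℝ]
    rw [hexp, ← h]
    abel
  have hexpnorm : (∑' i, ‖X‖ ^ i / (i ! : ℝ)) = Real.exp ‖X‖ := by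
    rw [Real.exp_eq_exp_ℝ, exp_eq_tsum_div]
  have hb : ∀ i : ℕ, ‖f (i + 4)‖ ≤ (|t| ^ 4 * ‖X‖ ^ 4) * (‖X‖ ^ i / (i ! : ℝ)) := by
    intro i
    have h1 : ‖f (i + 4)‖ ≤ (((i + 4)! : ℝ))⁻¹ * (|t| * ‖X‖) ^ (i + 4) := by
      rw [hfdef]
      simp only [norm_smul, Real.norm_eq_abs]
      rw [abs_of_nonneg (by positivity)]
      have h2 : ‖(t • X) ^ (i + 4)‖ ≤ ‖t • X‖ ^ (i + 4) := norm_pow_le' _ (by omega)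
      have h3 : ‖t • X‖ = |t| * ‖X‖ := by rw [norm_smul, Real.norm_eq_abs]
      rw [← h3]
      exact mul_le_mul_of_nonneg_left h2 (by positivity)
    refine h1.trans ?_
    have h4 : (((i + 4)! : ℝ))⁻¹ ≤ ((i ! : ℝ))⁻¹ := by
      apply inv_anti₀ (by positivity)
      exact_mod_cast Nat.factorial_le (by omega)
    have h5 : (|t| * ‖X‖) ^ (i + 4) = |t| ^ (i + 4) * ‖X‖ ^ (i + 4) := mul_pow _ _ _
    have h6 : |t| ^ (i + 4) ≤ |t| ^ 4 :=
      pow_le_pow_of_le_one (abs_nonneg t) ht (by omega)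
    calc (((i + 4)! : ℝ))⁻¹ * (|t| * ‖X‖) ^ (i + 4)
        ≤ ((i ! : ℝ))⁻¹ * (|t| ^ 4 * ‖X‖ ^ (i + 4)) := by
          rw [h5]
          apply mul_le_mul h4 (mul_le_mul_of_nonneg_right h6 (by positivity))
            (by positivity) (by positivity)
      _ = (|t| ^ 4 * ‖X‖ ^ 4) * (‖X‖ ^ i / (i ! : ℝ)) := by
          rw [pow_add ‖X‖ i 4]; field_simp
  have hgsum : Summable (fun i : ℕ => (|t| ^ 4 * ‖X‖ ^ 4) * (‖X‖ ^ i / (i ! : ℝ))) :=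
    (Real.summable_pow_div_factorial ‖X‖).mul_left _
  have hnsum : Summable fun i : ℕ => ‖f (i + 4)‖ :=
    Summable.of_nonneg_of_le (fun i => norm_nonneg _) hb hgsum
  rw [htail]
  calc ‖∑' i, f (i + 4)‖ ≤ ∑' i, ‖f (i + 4)‖ := norm_tsum_le_tsum_norm hnsum
    _ ≤ ∑' i : ℕ, (|t| ^ 4 * ‖X‖ ^ 4) * (‖X‖ ^ i / (i ! : ℝ)) := Summable.tsum_le_tsum hb hnsum hgsum
    _ = (|t| ^ 4 * ‖X‖ ^ 4) * ∑' i : ℕ, ‖X‖ ^ i / (i ! : ℝ) := tsum_mul_left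
    _ = (‖X‖ ^ 4 * Real.exp ‖X‖) * |t| ^ 4 := by rw [hexpnorm]; ring

private lemma strang_normP {𝔸 : Type*} [NormedRing 𝔸] [NormedAlgebra ℝ 𝔸]
    (X : 𝔸) (t : ℝ) (ht : |t| ≤ 1) :
    ‖∑ n ∈ Finset.range 4, ((n ! : ℝ))⁻¹ • (t • X) ^ n‖
      ≤ ‖(1 : 𝔸)‖ + ‖X‖ + ‖X‖ ^ 2 + ‖X‖ ^ 3 := by
  have hn : ∀ n : ℕ, 0 < n → ‖((n ! : ℝ))⁻¹ • (t • X) ^ n‖ ≤ ‖X‖ ^ n := by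
    intro n hn
    rw [norm_smul, Real.norm_eq_abs, abs_of_nonneg (by positivity)]
    have h1 : ((n ! : ℝ))⁻¹ ≤ 1 := by
      rw [inv_le_one_iff₀]; right; exact_mod_cast Nat.one_le_iff_ne_zero.mpr n.factorial_ne_zero
    calc ((n ! : ℝ))⁻¹ * ‖(t • X) ^ n‖ ≤ 1 * ‖t • X‖ ^ n :=
          mul_le_mul h1 (norm_pow_le' _ hn) (norm_nonneg _) zero_le_one
      _ = (|t| * ‖X‖) ^ n := by rw [one_mul, norm_smul, Real.norm_eq_abs]
      _ ≤ (1 * ‖X‖) ^ n :=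
          pow_le_pow_left₀ (by positivity) (mul_le_mul_of_nonneg_right ht (norm_nonneg X)) n
      _ = ‖X‖ ^ n := by rw [one_mul]
  have h0 : ‖((0! : ℝ))⁻¹ • (t • X) ^ 0‖ = ‖(1 : 𝔸)‖ := by norm_num
  rw [show (4 : ℕ) = 3 + 1 from rfl, Finset.sum_range_succ,
    show (3 : ℕ) = 2 + 1 from rfl, Finset.sum_range_succ,
    show (2 : ℕ) = 1 + 1 from rfl, Finset.sum_range_succ, Finset.sum_range_one]
  have t1 := hn 1 one_pos
  have t2 := hn 2 two_pos
  have t3 := hn 3 three_pos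
  have tri1 := norm_add_le (((0! : ℝ))⁻¹ • (t • X) ^ 0 + ((1! : ℝ))⁻¹ • (t • X) ^ 1
      + ((2! : ℝ))⁻¹ • (t • X) ^ 2) (((3! : ℝ))⁻¹ • (t • X) ^ 3)
  have tri2 := norm_add_le (((0! : ℝ))⁻¹ • (t • X) ^ 0 + ((1! : ℝ))⁻¹ • (t • X) ^ 1)
      (((2! : ℝ))⁻¹ • (t • X) ^ 2)
  have tri3 := norm_add_le (((0! : ℝ))⁻¹ • (t • X) ^ 0) (((1! : ℝ))⁻¹ • (t • X) ^ 1)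
  linarith

set_option maxHeartbeats 1000000 in
/-- In a Banach algebra, the one-step Strang splitting error equals
`(t³/6)·E + O(t⁴)`, where
`E = (BA² + A²B + BAB)/2 - (B²A + AB²)/4 - ABA`: there is `C > 0` such that
for all `|t| ≤ 1` the remainder is bounded by `C |t|⁴`. -/
theorem strang_splitting_error_bound
    {𝔸 : Type*} [NormedRing 𝔸] [NormedAlgebra ℝ 𝔸] [CompleteSpace 𝔸]
    (A B : 𝔸)
    (E : 𝔸)
    (hE : E = (2 : ℝ)⁻¹ • (B * A ^ 2 + A ^ 2 * B + B * A * B)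
        - (4 : ℝ)⁻¹ • (B ^ 2 * A + A * B ^ 2)
        - A * B * A) :
    ∃ C : ℝ, 0 < C ∧ ∀ t : ℝ, |t| ≤ 1 →
      ‖exp ((t / 2) • B) * exp (t • A) * exp ((t / 2) • B)
          - exp (t • (A + B)) - (t ^ 3 / 6) • E‖ ≤ C * |t| ^ 4 := by
  obtain ⟨N, hN0, hN⟩ : ∃ N : ℝ, 0 ≤ N ∧ ∀ t ∈ Set.Icc (-1 : ℝ) 1, ‖strangG A B t‖ ≤ N := by
    have hc : Continuous fun t : ℝ => strangG A B t := by
      unfold strangG; fun_prop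
    obtain ⟨x, -, hx⟩ := isCompact_Icc.exists_isMaxOn (Set.nonempty_Icc.2 (by norm_num : (-1:ℝ) ≤ 1))
      hc.norm.continuousOn
    exact ⟨‖strangG A B x‖, norm_nonneg _, fun t ht => hx ht⟩
  set KA : ℝ := ‖A‖ ^ 4 * Real.exp ‖A‖ with hKA
  set KB : ℝ := ‖B‖ ^ 4 * Real.exp ‖B‖ with hKB
  set KS : ℝ := ‖A + B‖ ^ 4 * Real.exp ‖A + B‖ with hKS
  set cA : ℝ := ‖(1 : 𝔸)‖ + ‖A‖ + ‖A‖ ^ 2 + ‖A‖ ^ 3 with hcA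
  set cB : ℝ := ‖(1 : 𝔸)‖ + ‖B‖ + ‖B‖ ^ 2 + ‖B‖ ^ 3 with hcB
  have hKA0 : (0 : ℝ) ≤ KA := by rw [hKA]; positivity
  have hKB0 : (0 : ℝ) ≤ KB := by rw [hKB]; positivity
  have hKS0 : (0 : ℝ) ≤ KS := by rw [hKS]; positivity
  have hcA0 : (0 : ℝ) ≤ cA := by rw [hcA]; positivity
  have hcB0 : (0 : ℝ) ≤ cB := by rw [hcB]; positivity
  refine ⟨N + KB * ((cA + KA) * (cB + KB)) + cB * (KA * (cB + KB)) + cB * cA * KB + KS + 1,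
    by nlinarith [mul_nonneg hKB0 (mul_nonneg (add_nonneg hcA0 hKA0) (add_nonneg hcB0 hKB0)),
      mul_nonneg hcB0 (mul_nonneg hKA0 (add_nonneg hcB0 hKB0)),
      mul_nonneg (mul_nonneg hcB0 hcA0) hKB0], ?_⟩
  intro t ht
  have ht4 : |t| ^ 4 ≤ 1 := pow_le_one₀ (abs_nonneg t) ht
  have ht2 : |t / 2| ≤ 1 := by rw [abs_div, abs_two]; linarith [abs_nonneg t]
  have htdiv : |t / 2| ≤ |t| := by rw [abs_div, abs_two]; linarith [abs_nonneg t]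
  have ht2' : |t / 2| ^ 4 ≤ |t| ^ 4 := pow_le_pow_left₀ (abs_nonneg _) htdiv 4
  set P1 : 𝔸 := ∑ n ∈ Finset.range 4, ((n ! : ℝ))⁻¹ • ((t / 2) • B) ^ n with hP1
  set P2 : 𝔸 := ∑ n ∈ Finset.range 4, ((n ! : ℝ))⁻¹ • (t • A) ^ n with hP2
  set P4 : 𝔸 := ∑ n ∈ Finset.range 4, ((n ! : ℝ))⁻¹ • (t • (A + B)) ^ n with hP4
  have hS1 : ‖exp ((t / 2) • B) - P1‖ ≤ KB * |t| ^ 4 := by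
    rw [hP1, hKB]
    exact (strang_rem B (t / 2) ht2).trans
      (mul_le_mul_of_nonneg_left ht2' (by positivity))
  have hS2 : ‖exp (t • A) - P2‖ ≤ KA * |t| ^ 4 := by
    rw [hP2, hKA]; exact strang_rem A t ht
  have hS4 : ‖exp (t • (A + B)) - P4‖ ≤ KS * |t| ^ 4 := by
    rw [hP4, hKS]; exact strang_rem (A + B) t ht
  have hP1n : ‖P1‖ ≤ cB := by rw [hP1, hcB]; exact strang_normP B (t / 2) ht2
  have hP2n : ‖P2‖ ≤ cA := by rw [hP2, hcA]; exact strang_normP A t ht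
  have hY : ‖exp (t • A)‖ ≤ cA + KA := by
    calc ‖exp (t • A)‖ = ‖P2 + (exp (t • A) - P2)‖ := by rw [add_sub_cancel]
      _ ≤ ‖P2‖ + ‖exp (t • A) - P2‖ := norm_add_le _ _
      _ ≤ cA + KA * |t| ^ 4 := add_le_add hP2n hS2
      _ ≤ cA + KA := by nlinarith [mul_le_mul_of_nonneg_left ht4 hKA0]
  have hZ : ‖exp ((t / 2) • B)‖ ≤ cB + KB := by
    calc ‖exp ((t / 2) • B)‖ = ‖P1 + (exp ((t / 2) • B) - P1)‖ := by rw [add_sub_cancel]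
      _ ≤ ‖P1‖ + ‖exp ((t / 2) • B) - P1‖ := norm_add_le _ _
      _ ≤ cB + KB * |t| ^ 4 := add_le_add hP1n hS1
      _ ≤ cB + KB := by nlinarith [mul_le_mul_of_nonneg_left ht4 hKB0]
  have hdecomp : exp ((t / 2) • B) * exp (t • A) * exp ((t / 2) • B)
      - exp (t • (A + B)) - (t ^ 3 / 6) • E
      = t ^ 4 • strangG A B t
        + (exp ((t / 2) • B) - P1) * (exp (t • A) * exp ((t / 2) • B))
        + P1 * ((exp (t • A) - P2) * exp ((t / 2) • B))
        + P1 * P2 * (exp ((t / 2) • B) - P1)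
        - (exp (t • (A + B)) - P4) := by
    rw [← strang_key A B E hE t, hP1, hP2, hP4]
    generalize exp ((t / 2) • B) = X1
    generalize exp (t • A) = X2
    generalize exp (t • (A + B)) = X4
    generalize ((t ^ 3 / 6) • E : 𝔸) = e
    noncomm_ring
  rw [hdecomp]
  have hb1 : ‖t ^ 4 • strangG A B t‖ ≤ N * |t| ^ 4 := by
    rw [norm_smul, Real.norm_eq_abs, ← abs_pow]
    rw [abs_pow]
    calc |t| ^ 4 * ‖strangG A B t‖ ≤ |t| ^ 4 * N := by
          apply mul_le_mul_of_nonneg_left _ (by positivity)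
          exact hN t (abs_le.mp ht)
      _ = N * |t| ^ 4 := mul_comm _ _
  have hb2 : ‖(exp ((t / 2) • B) - P1) * (exp (t • A) * exp ((t / 2) • B))‖
      ≤ (KB * |t| ^ 4) * ((cA + KA) * (cB + KB)) := by
    calc ‖(exp ((t / 2) • B) - P1) * (exp (t • A) * exp ((t / 2) • B))‖
        ≤ ‖exp ((t / 2) • B) - P1‖ * ‖exp (t • A) * exp ((t / 2) • B)‖ :=
          norm_mul_le _ _
      _ ≤ ‖exp ((t / 2) • B) - P1‖ * (‖exp (t • A)‖ * ‖exp ((t / 2) • B)‖) :=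
          mul_le_mul_of_nonneg_left (norm_mul_le _ _) (norm_nonneg _)
      _ ≤ (KB * |t| ^ 4) * ((cA + KA) * (cB + KB)) := by
          apply mul_le_mul hS1 _ (by positivity) (mul_nonneg hKB0 (by positivity))
          exact mul_le_mul hY hZ (norm_nonneg _) (le_trans (norm_nonneg _) hY)
  have hb3 : ‖P1 * ((exp (t • A) - P2) * exp ((t / 2) • B))‖
      ≤ cB * ((KA * |t| ^ 4) * (cB + KB)) := by
    calc ‖P1 * ((exp (t • A) - P2) * exp ((t / 2) • B))‖
        ≤ ‖P1‖ * ‖(exp (t • A) - P2) * exp ((t / 2) • B)‖ := norm_mul_le _ _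
      _ ≤ ‖P1‖ * (‖exp (t • A) - P2‖ * ‖exp ((t / 2) • B)‖) :=
          mul_le_mul_of_nonneg_left (norm_mul_le _ _) (norm_nonneg _)
      _ ≤ cB * ((KA * |t| ^ 4) * (cB + KB)) := by
          apply mul_le_mul hP1n _ (by positivity) hcB0
          exact mul_le_mul hS2 hZ (norm_nonneg _) (mul_nonneg hKA0 (by positivity))
  have hb4 : ‖P1 * P2 * (exp ((t / 2) • B) - P1)‖ ≤ cB * cA * (KB * |t| ^ 4) := by
    calc ‖P1 * P2 * (exp ((t / 2) • B) - P1)‖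
        ≤ ‖P1 * P2‖ * ‖exp ((t / 2) • B) - P1‖ := norm_mul_le _ _
      _ ≤ (‖P1‖ * ‖P2‖) * ‖exp ((t / 2) • B) - P1‖ :=
          mul_le_mul_of_nonneg_right (norm_mul_le _ _) (norm_nonneg _)
      _ ≤ cB * cA * (KB * |t| ^ 4) := by
          apply mul_le_mul _ hS1 (norm_nonneg _) (mul_nonneg hcB0 hcA0)
          exact mul_le_mul hP1n hP2n (norm_nonneg _) hcB0
  have tri : ‖t ^ 4 • strangG A B t
        + (exp ((t / 2) • B) - P1) * (exp (t • A) * exp ((t / 2) • B))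
        + P1 * ((exp (t • A) - P2) * exp ((t / 2) • B))
        + P1 * P2 * (exp ((t / 2) • B) - P1)
        - (exp (t • (A + B)) - P4)‖
      ≤ ‖t ^ 4 • strangG A B t‖
        + ‖(exp ((t / 2) • B) - P1) * (exp (t • A) * exp ((t / 2) • B))‖
        + ‖P1 * ((exp (t • A) - P2) * exp ((t / 2) • B))‖
        + ‖P1 * P2 * (exp ((t / 2) • B) - P1)‖
        + ‖exp (t • (A + B)) - P4‖ := by
    have h1 := norm_sub_le (t ^ 4 • strangG A B t
        + (exp ((t / 2) • B) - P1) * (exp (t • A) * exp ((t / 2) • B))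
        + P1 * ((exp (t • A) - P2) * exp ((t / 2) • B))
        + P1 * P2 * (exp ((t / 2) • B) - P1)) (exp (t • (A + B)) - P4)
    have h2 := norm_add_le (t ^ 4 • strangG A B t
        + (exp ((t / 2) • B) - P1) * (exp (t • A) * exp ((t / 2) • B))
        + P1 * ((exp (t • A) - P2) * exp ((t / 2) • B)))
        (P1 * P2 * (exp ((t / 2) • B) - P1))
    have h3 := norm_add_le (t ^ 4 • strangG A B t
        + (exp ((t / 2) • B) - P1) * (exp (t • A) * exp ((t / 2) • B)))
        (P1 * ((exp (t • A) - P2) * exp ((t / 2) • B)))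
    have h4 := norm_add_le (t ^ 4 • strangG A B t)
        ((exp ((t / 2) • B) - P1) * (exp (t • A) * exp ((t / 2) • B)))
    linarith
  refine tri.trans ?_
  have hfin : (0 : ℝ) ≤ |t| ^ 4 := by positivity
  nlinarith [hb1, hb2, hb3, hb4, hS4, hfin]
end
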